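/- A ring homomorphism \phi: F_2[x_1,...,x_n] \to F_2[x_1,...,x_m] preserves neural ideals if and only if \phi is surjective and for every pseudomonomial f in F_2[x_1,...,x_n], the image \phi(f) is either a pseudomonomial or zero. -/

import Mathlib

open MvPolynomial

/-- The pseudomonomial with positive part `σ` and negative part `τ`. -/
noncomputable def pm {n : ℕ} (σ τ : Finset (Fin n)) : MvPolynomial (Fin n) (ZMod 2) :=
  (∏ i ∈ σ, X i) * ∏ j ∈ τ, (1 - X j)

/-- A polynomial is a pseudomonomial if it is `pm σ τ` for disjoint `σ τ`. -/
def IsPseudomonomial {n : ℕ} (f : MvPolynomial (Fin n) (ZMod 2)) : Prop :=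
  ∃ σ τ : Finset (Fin n), Disjoint σ τ ∧ f = pm σ τ

/-- The indicator pseudomonomial `ρ_v` of a vector `v ∈ F₂ⁿ`. -/
noncomputable def indicatorPM {n : ℕ} (v : Fin n → ZMod 2) : MvPolynomial (Fin n) (ZMod 2) :=
  pm (Finset.univ.filter fun i => v i = 1) (Finset.univ.filter fun i => ¬ v i = 1)

/-- The neural ideal of a code `C ⊆ F₂ⁿ`. -/
noncomputable def neuralIdeal {n : ℕ} (C : Set (Fin n → ZMod 2)) :
    Ideal (MvPolynomial (Fin n) (ZMod 2)) :=
  Ideal.span (indicatorPM '' {v | v ∉ C})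

/-- A ring homomorphism preserves neural ideals if the image of every neural ideal
is a neural ideal. -/
def PreservesNeuralIdeals {n m : ℕ}
    (φ : MvPolynomial (Fin n) (ZMod 2) →+* MvPolynomial (Fin m) (ZMod 2)) : Prop :=
  ∀ C : Set (Fin n → ZMod 2), ∃ D : Set (Fin m → ZMod 2),
    φ '' (neuralIdeal C : Set (MvPolynomial (Fin n) (ZMod 2))) =
      (neuralIdeal D : Set (MvPolynomial (Fin m) (ZMod 2)))

/-- The bit flip homomorphism `δ_i`. -/
noncomputable def bitFlip {n : ℕ} (i : Fin n) :
    MvPolynomial (Fin n) (ZMod 2) →ₐ[ZMod 2] MvPolynomial (Fin n) (ZMod 2) :=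
  aeval (fun j => if j = i then 1 - X j else X j)

/-- The restriction map `ω_{m,m'} : F₂[x₁,…,xₙ] → F₂[x₁,…,x_m]`. -/
noncomputable def restrictionMap (n m m' : ℕ) :
    MvPolynomial (Fin n) (ZMod 2) →ₐ[ZMod 2] MvPolynomial (Fin m) (ZMod 2) :=
  aeval (fun i : Fin n => if h : (i : ℕ) < m then X (⟨i, h⟩ : Fin m)
    else if (i : ℕ) < m' then 0 else 1)

lemma zmod2_cases (a : ZMod 2) : a = 0 ∨ a = 1 := by revert a; decide

lemma eval_pm {n : ℕ} (v : Fin n → ZMod 2) (σ τ : Finset (Fin n)) :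
    eval v (pm σ τ) = (∏ i ∈ σ, v i) * ∏ j ∈ τ, (1 - v j) := by
  simp [pm]

lemma pm_mul_pm {n : ℕ} (σ₁ τ₁ σ₂ τ₂ : Finset (Fin n)) (hσ : Disjoint σ₁ σ₂)
    (hτ : Disjoint τ₁ τ₂) : pm σ₁ τ₁ * pm σ₂ τ₂ = pm (σ₁ ∪ σ₂) (τ₁ ∪ τ₂) := by
  rw [pm, pm, pm, Finset.prod_union hσ, Finset.prod_union hτ]; ring

def zeroSet {n : ℕ} (I : Ideal (MvPolynomial (Fin n) (ZMod 2))) : Set (Fin n → ZMod 2) :=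
  {v | ∀ f ∈ I, eval v f = 0}

lemma pm_mem_neuralIdeal_aux {n : ℕ} (D : Set (Fin n → ZMod 2)) :
    ∀ (c : ℕ) (σ τ : Finset (Fin n)), (σ ∪ τ)ᶜ.card = c → Disjoint σ τ →
      (∀ v, eval v (pm σ τ) ≠ 0 → v ∉ D) → pm σ τ ∈ neuralIdeal D := by
  intro c
  induction c with
  | zero =>
    intro σ τ hc hd hv
    have huniv : σ ∪ τ = Finset.univ := by
      rwa [Finset.card_eq_zero, Finset.compl_eq_empty_iff] at hc
    set v : Fin n → ZMod 2 := fun i => if i ∈ σ then 1 else 0 with hvdef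
    have hvs : ∀ i, (v i = 1 ↔ i ∈ σ) := by
      intro i; by_cases h : i ∈ σ <;> simp [hvdef, h]
    have hfil : (Finset.univ.filter fun i => v i = 1) = σ := by
      ext i; simp [hvs i]
    have hfil' : (Finset.univ.filter fun i => ¬ v i = 1) = τ := by
      ext i
      simp only [Finset.mem_filter, Finset.mem_univ, true_and, hvs i]
      constructor
      · intro h
        have := Finset.mem_union.mp (huniv ▸ Finset.mem_univ i)
        tauto
      · intro h
        exact fun hs => (Finset.disjoint_left.mp hd hs) h
    have hind : indicatorPM v = pm σ τ := by rw [indicatorPM, hfil, hfil']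
    have heval : eval v (pm σ τ) = 1 := by
      rw [eval_pm]
      have h1 : ∀ i ∈ σ, v i = 1 := fun i hi => (hvs i).mpr hi
      have h2 : ∀ j ∈ τ, (1 : ZMod 2) - v j = 1 := by
        intro j hj
        have : v j = 0 := by
          simp [hvdef, Finset.disjoint_right.mp hd hj]
        rw [this]; ring
      rw [Finset.prod_congr rfl h1, Finset.prod_congr rfl h2]
      simp
    have hvD : v ∉ D := hv v (by rw [heval]; exact one_ne_zero)
    rw [← hind]
    exact Ideal.subset_span ⟨v, hvD, rfl⟩
  | succ c ih =>
    intro σ τ hc hd hv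
    have : (σ ∪ τ)ᶜ.Nonempty := by
      rw [← Finset.card_pos, hc]; omega
    obtain ⟨k, hk⟩ := this
    have hkσ : k ∉ σ := fun h => (Finset.mem_compl.mp hk) (Finset.mem_union_left _ h)
    have hkτ : k ∉ τ := fun h => (Finset.mem_compl.mp hk) (Finset.mem_union_right _ h)
    have h1 : pm (insert k σ) τ = X k * pm σ τ := by
      rw [pm, pm, Finset.prod_insert hkσ]; ring
    have h2 : pm σ (insert k τ) = (1 - X k) * pm σ τ := by
      rw [pm, pm, Finset.prod_insert hkτ]; ring
    have key : pm σ τ = pm (insert k σ) τ + pm σ (insert k τ) := by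
      rw [h1, h2]; ring
    have c1 : ((insert k σ) ∪ τ)ᶜ.card = c := by
      rw [Finset.insert_union, Finset.compl_insert, Finset.card_erase_of_mem hk, hc]; omega
    have c2 : (σ ∪ (insert k τ))ᶜ.card = c := by
      rw [Finset.union_insert, Finset.compl_insert, Finset.card_erase_of_mem hk, hc]; omega
    have d1 : Disjoint (insert k σ) τ := by
      rw [Finset.disjoint_insert_left]; exact ⟨hkτ, hd⟩
    have d2 : Disjoint σ (insert k τ) := by
      rw [Finset.disjoint_insert_right]; exact ⟨hkσ, hd⟩
    have m1 : pm (insert k σ) τ ∈ neuralIdeal D := by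
      apply ih _ _ c1 d1
      intro v hne
      apply hv
      intro h0
      apply hne
      rw [h1, map_mul, h0, mul_zero]
    have m2 : pm σ (insert k τ) ∈ neuralIdeal D := by
      apply ih _ _ c2 d2
      intro v hne
      apply hv
      intro h0
      apply hne
      rw [h2, map_mul, h0, mul_zero]
    rw [key]
    exact Ideal.add_mem _ m1 m2

lemma pm_mem_neuralIdeal {n : ℕ} (D : Set (Fin n → ZMod 2)) (σ τ : Finset (Fin n))
    (hd : Disjoint σ τ) (hv : ∀ v, eval v (pm σ τ) ≠ 0 → v ∉ D) :
    pm σ τ ∈ neuralIdeal D :=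
  pm_mem_neuralIdeal_aux D _ σ τ rfl hd hv

lemma span_pseudo_eq_neuralIdeal {n : ℕ} (S : Set (MvPolynomial (Fin n) (ZMod 2)))
    (hS : ∀ g ∈ S, IsPseudomonomial g ∨ g = 0) :
    Ideal.span S = neuralIdeal (zeroSet (Ideal.span S)) := by
  apply le_antisymm
  · rw [Ideal.span_le]
    intro g hg
    rcases hS g hg with ⟨σ, τ, hd, rfl⟩ | rfl
    · exact pm_mem_neuralIdeal _ σ τ hd
        (fun v hv hvD => hv (hvD _ (Ideal.subset_span hg)))
    · exact Ideal.zero_mem _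
  · rw [neuralIdeal, Ideal.span_le]
    rintro _ ⟨v, hv, rfl⟩
    have hex : ∃ g ∈ S, eval v g ≠ 0 := by
      by_contra hcon
      push_neg at hcon
      apply hv
      intro f hf
      have hker : Ideal.span S ≤ RingHom.ker (eval v) :=
        Ideal.span_le.mpr fun g hg => hcon g hg
      exact hker hf
    obtain ⟨g, hgS, hge⟩ := hex
    rcases hS g hgS with ⟨σ, τ, hd, rfl⟩ | rfl
    · rw [eval_pm] at hge
      have hne := mul_ne_zero_iff.mp hge
      have h1 : ∀ i ∈ σ, v i = 1 := by
        intro i hi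
        rcases zmod2_cases (v i) with h | h
        · exact absurd (Finset.prod_eq_zero hi h) hne.1
        · exact h
      have h2 : ∀ j ∈ τ, ¬ v j = 1 := by
        intro j hj h
        exact hne.2 (Finset.prod_eq_zero hj (by rw [h]; ring))
      set σ' := Finset.univ.filter fun i => v i = 1 with hσ'
      set τ' := Finset.univ.filter fun i => ¬ v i = 1 with hτ'
      have hsσ : σ ⊆ σ' := fun i hi => Finset.mem_filter.mpr ⟨Finset.mem_univ i, h1 i hi⟩
      have hsτ : τ ⊆ τ' := fun j hj => Finset.mem_filter.mpr ⟨Finset.mem_univ j, h2 j hj⟩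
      have heq : indicatorPM v = pm σ τ * pm (σ' \ σ) (τ' \ τ) := by
        rw [indicatorPM, pm_mul_pm _ _ _ _ Finset.disjoint_sdiff Finset.disjoint_sdiff,
          Finset.union_sdiff_of_subset hsσ, Finset.union_sdiff_of_subset hsτ]
      rw [heq]
      exact Ideal.mul_mem_right _ _ (Ideal.subset_span hgS)
    · simp at hge

lemma neuralIdeal_empty {n : ℕ} : neuralIdeal (∅ : Set (Fin n → ZMod 2)) = ⊤ := by
  rw [Ideal.eq_top_iff_one]
  have h1 : (1 : MvPolynomial (Fin n) (ZMod 2)) = pm ∅ ∅ := by simp [pm]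
  rw [h1]
  exact pm_mem_neuralIdeal _ _ _ (by simp) (fun v _ => Set.notMem_empty v)

lemma image_ideal_eq {A B : Type*} [CommRing A] [CommRing B] (φ : A →+* B)
    (hφ : Function.Surjective φ) (I : Ideal A) :
    φ '' (I : Set A) = (Ideal.map φ I : Set B) := by
  ext y
  constructor
  · rintro ⟨x, hx, rfl⟩; exact Ideal.mem_map_of_mem φ hx
  · intro hy
    obtain ⟨x, hx, rfl⟩ := (Ideal.mem_map_iff_of_surjective φ hφ).1 hy
    exact ⟨x, hx, rfl⟩

lemma bitFlip_X {n : ℕ} (i j : Fin n) :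
    bitFlip i (X j) = if j = i then 1 - X j else X j := by
  simp [bitFlip]

lemma bitFlip_comp {n : ℕ} (i : Fin n) :
    (bitFlip i).comp (bitFlip i) = AlgHom.id (ZMod 2) _ := by
  apply MvPolynomial.algHom_ext
  intro j
  simp only [AlgHom.coe_comp, Function.comp_apply, bitFlip_X, AlgHom.coe_id, id_eq]
  by_cases h : j = i
  · simp [h, bitFlip_X]
  · simp [h, bitFlip_X]

noncomputable def flipEquiv {n : ℕ} (i : Fin n) :
    MvPolynomial (Fin n) (ZMod 2) ≃ₐ[ZMod 2] MvPolynomial (Fin n) (ZMod 2) :=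
  AlgEquiv.ofAlgHom (bitFlip i) (bitFlip i) (bitFlip_comp i) (bitFlip_comp i)

lemma prime_X_zmod2 {n : ℕ} (i : Fin n) :
    Prime (X i : MvPolynomial (Fin n) (ZMod 2)) := by
  cases n with
  | zero => exact i.elim0
  | succ k =>
    let e := renameEquiv (ZMod 2) (Equiv.swap (0 : Fin (k + 1)) i)
    have h0 : (X i : MvPolynomial (Fin (k + 1)) (ZMod 2)) = e (X 0) := by
      simp [e, renameEquiv_apply, rename_X, Equiv.swap_apply_left]
    have h1 : Prime ((finSuccEquiv (ZMod 2) k) (X 0)) := by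
      rw [finSuccEquiv_X_zero]
      exact Polynomial.prime_X
    have h2 : Prime (X 0 : MvPolynomial (Fin (k + 1)) (ZMod 2)) :=
      (MulEquiv.prime_iff (finSuccEquiv (ZMod 2) k).toMulEquiv).mp h1
    rw [h0]
    exact (MulEquiv.prime_iff e.toMulEquiv).mpr h2

lemma prime_one_sub_X_zmod2 {n : ℕ} (i : Fin n) :
    Prime (1 - X i : MvPolynomial (Fin n) (ZMod 2)) := by
  have h0 : (1 - X i : MvPolynomial (Fin n) (ZMod 2)) = flipEquiv i (X i) := by
    simp [flipEquiv, bitFlip_X]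
  rw [h0]
  exact (MulEquiv.prime_iff (flipEquiv i).toMulEquiv).mpr (prime_X_zmod2 i)

lemma isUnit_eq_one {n : ℕ} : ∀ u : MvPolynomial (Fin n) (ZMod 2), IsUnit u → u = 1 := by
  induction n with
  | zero =>
    intro u hu
    let e := isEmptyAlgEquiv (ZMod 2) (Fin 0)
    have h1 : IsUnit (e u) := hu.map e
    have h2 : e u = 1 := by
      rcases zmod2_cases (e u) with h | h
      · exact absurd h h1.ne_zero
      · exact h
    have := congrArg e.symm h2
    simpa using this
  | succ k ih =>
    intro u hu
    let e := finSuccEquiv (ZMod 2) k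
    have h1 : IsUnit (e u) := hu.map e
    rw [Polynomial.isUnit_iff] at h1
    obtain ⟨r, hr, hCr⟩ := h1
    have hr1 : r = 1 := ih r hr
    subst hr1
    have h2 : e u = 1 := by rw [← hCr]; simp
    have := congrArg e.symm h2
    simpa using this

lemma assoc_eq {n : ℕ} {g h : MvPolynomial (Fin n) (ZMod 2)} (ha : Associated g h) :
    g = h := by
  obtain ⟨u, hu⟩ := ha
  rw [← hu, isUnit_eq_one u.1 u.isUnit, mul_one]

lemma mul_eq_prod_primes {α : Type*} [CommRing α] [IsDomain α] {ι : Type*} [DecidableEq ι]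
    (p : ι → α) (hp : ∀ i, Prime (p i)) :
    ∀ (s : Finset ι) (g h : α), g * h = ∏ i ∈ s, p i →
      ∃ t ⊆ s, Associated g (∏ i ∈ t, p i) := by
  intro s
  induction s using Finset.induction_on with
  | empty =>
    intro g h hgh
    simp only [Finset.prod_empty] at hgh
    exact ⟨∅, Finset.Subset.refl _, by
      rw [Finset.prod_empty]
      exact associated_one_iff_isUnit.mpr (IsUnit.of_mul_eq_one h hgh)⟩
  | @insert a s ha ih =>
    intro g h hgh
    rw [Finset.prod_insert ha] at hgh
    have hdvd : p a ∣ g * h := ⟨_, hgh⟩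
    rcases (hp a).2.2 g h hdvd with ⟨g', hg'⟩ | ⟨h', hh'⟩
    · subst hg'
      have hcan : g' * h = ∏ i ∈ s, p i :=
        mul_left_cancel₀ (hp a).ne_zero (by rw [← hgh]; ring)
      obtain ⟨t, hts, hass⟩ := ih g' h hcan
      refine ⟨insert a t, Finset.insert_subset_insert a hts, ?_⟩
      have hat : a ∉ t := fun hmem => ha (hts hmem)
      rw [Finset.prod_insert hat]
      exact hass.mul_left (p a)
    · subst hh'
      have hcan : g * h' = ∏ i ∈ s, p i :=
        mul_left_cancel₀ (hp a).ne_zero (by rw [← hgh]; ring)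
      obtain ⟨t, hts, hass⟩ := ih g h' hcan
      exact ⟨t, hts.trans (Finset.subset_insert a s), hass⟩

lemma indicatorPM_eq_prod {n : ℕ} (v : Fin n → ZMod 2) :
    indicatorPM v = ∏ i : Fin n, (if v i = 1 then X i else 1 - X i) := by
  classical
  rw [indicatorPM, pm,
    ← Finset.prod_filter_mul_prod_filter_not Finset.univ (fun i => v i = 1)
      (fun i => if v i = 1 then (X i : MvPolynomial (Fin n) (ZMod 2)) else 1 - X i)]
  congr 1
  · apply Finset.prod_congr rfl
    intro i hi
    rw [Finset.mem_filter] at hi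
    simp [hi.2]
  · apply Finset.prod_congr rfl
    intro i hi
    rw [Finset.mem_filter] at hi
    simp [hi.2]

lemma isPseudomonomial_of_dvd_indicator {n : ℕ} (v : Fin n → ZMod 2)
    (g : MvPolynomial (Fin n) (ZMod 2)) (hdvd : g ∣ indicatorPM v) :
    IsPseudomonomial g := by
  classical
  obtain ⟨h, hh⟩ := hdvd
  have hp : ∀ i : Fin n,
      Prime (if v i = 1 then (X i : MvPolynomial (Fin n) (ZMod 2)) else 1 - X i) := by
    intro i
    by_cases hvi : v i = 1
    · simp only [hvi, if_pos]; exact prime_X_zmod2 i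
    · simp only [hvi, if_false]; exact prime_one_sub_X_zmod2 i
  obtain ⟨t, _, hass⟩ := mul_eq_prod_primes
    (fun i => if v i = 1 then (X i : MvPolynomial (Fin n) (ZMod 2)) else 1 - X i)
    hp Finset.univ g h (by rw [← hh, indicatorPM_eq_prod])
  have hg : g = ∏ i ∈ t, (if v i = 1 then (X i : MvPolynomial (Fin n) (ZMod 2)) else 1 - X i) :=
    assoc_eq hass
  refine ⟨t.filter (fun i => v i = 1), t.filter (fun i => ¬ v i = 1),
    Finset.disjoint_filter_filter_not t t _, ?_⟩
  rw [hg, pm, ← Finset.prod_filter_mul_prod_filter_not t (fun i => v i = 1)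
    (fun i => if v i = 1 then (X i : MvPolynomial (Fin n) (ZMod 2)) else 1 - X i)]
  congr 1
  · apply Finset.prod_congr rfl
    intro i hi
    rw [Finset.mem_filter] at hi
    simp [hi.2]
  · apply Finset.prod_congr rfl
    intro i hi
    rw [Finset.mem_filter] at hi
    simp [hi.2]

lemma indicatorPM_isPseudo {n : ℕ} (v : Fin n → ZMod 2) :
    IsPseudomonomial (indicatorPM v) :=
  ⟨_, _, Finset.disjoint_filter_filter_not Finset.univ Finset.univ _, rfl⟩

theorem preserves_iff_surjective_and_pseudo {n m : ℕ}
    (φ : MvPolynomial (Fin n) (ZMod 2) →+* MvPolynomial (Fin m) (ZMod 2)) :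
    PreservesNeuralIdeals φ ↔
      Function.Surjective φ ∧
        ∀ f, IsPseudomonomial f → IsPseudomonomial (φ f) ∨ φ f = 0 := by
  constructor
  · intro hpres
    have hsurj : Function.Surjective φ := by
      obtain ⟨D, hD⟩ := hpres ∅
      rw [neuralIdeal_empty] at hD
      have h1 : (1 : MvPolynomial (Fin m) (ZMod 2)) ∈ (neuralIdeal D : Set _) := by
        rw [← hD]
        exact ⟨1, Submodule.mem_top, map_one φ⟩
      have htop : neuralIdeal D = ⊤ := (Ideal.eq_top_iff_one _).mpr h1
      rw [htop] at hD
      intro y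
      have hy : y ∈ φ '' ((⊤ : Ideal (MvPolynomial (Fin n) (ZMod 2))) : Set _) := by
        rw [hD]; exact Submodule.mem_top
      obtain ⟨x, _, hx⟩ := hy
      exact ⟨x, hx⟩
    refine ⟨hsurj, ?_⟩
    rintro f ⟨σ, τ, hd, rfl⟩
    by_cases h0 : φ (pm σ τ) = 0
    · right; exact h0
    left
    have hspan : Ideal.span {pm σ τ} = neuralIdeal (zeroSet (Ideal.span {pm σ τ})) :=
      span_pseudo_eq_neuralIdeal {pm σ τ}
        (by rintro g hg; rw [Set.mem_singleton_iff] at hg; subst hg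
            exact Or.inl ⟨σ, τ, hd, rfl⟩)
    obtain ⟨D, hD⟩ := hpres (zeroSet (Ideal.span {pm σ τ}))
    rw [← hspan, image_ideal_eq φ hsurj, Ideal.map_span, Set.image_singleton] at hD
    have hideal : Ideal.span {φ (pm σ τ)} = neuralIdeal D := SetLike.coe_injective hD
    have hex : ∃ v, v ∉ D := by
      by_contra hall
      push_neg at hall
      have hempty : {v | v ∉ D} = ∅ := by
        ext v; simp [hall v]
      have hbot : neuralIdeal D = ⊥ := by
        rw [neuralIdeal, hempty, Set.image_empty, Ideal.span_empty]
      apply h0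
      have hf : φ (pm σ τ) ∈ Ideal.span {φ (pm σ τ)} := Ideal.mem_span_singleton_self _
      rw [hideal, hbot] at hf
      exact (Ideal.mem_bot).mp hf
    obtain ⟨v, hv⟩ := hex
    have hmem : indicatorPM v ∈ Ideal.span {φ (pm σ τ)} := by
      rw [hideal]
      exact Ideal.subset_span ⟨v, hv, rfl⟩
    rw [Ideal.mem_span_singleton] at hmem
    exact isPseudomonomial_of_dvd_indicator v _ hmem
  · rintro ⟨hsurj, hpm⟩ C
    have hgen : ∀ g ∈ φ '' (indicatorPM '' {v | v ∉ C}), IsPseudomonomial g ∨ g = 0 := by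
      rintro _ ⟨_, ⟨v, _, rfl⟩, rfl⟩
      exact hpm _ (indicatorPM_isPseudo v)
    refine ⟨zeroSet (Ideal.span (φ '' (indicatorPM '' {v | v ∉ C}))), ?_⟩
    have hmap : Ideal.map φ (neuralIdeal C) =
        neuralIdeal (zeroSet (Ideal.span (φ '' (indicatorPM '' {v | v ∉ C})))) := by
      rw [neuralIdeal, Ideal.map_span]
      exact span_pseudo_eq_neuralIdeal _ hgen
    rw [image_ideal_eq φ hsurj, hmap]
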